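/- Call a real symmetric n×n matrix A friendly if A has n distinct eigenvalues and every eigenvector u of A satisfies 𝟙ᵀu ≠ 0. Every friendly matrix is asymmetric: the only permutation matrix P satisfying P A = A P is the identity, i.e., the automorphism group of the corresponding graph is trivial. -/

import Mathlib

open Matrix BigOperators

def IsPermMatrix {n : ℕ} (P : Matrix (Fin n) (Fin n) ℝ) : Prop :=
  (∀ i j, P i j = 0 ∨ P i j = 1) ∧ (∀ i, ∑ j, P i j = 1) ∧ (∀ j, ∑ i, P i j = 1)

def IsDoublyStochastic {n : ℕ} (P : Matrix (Fin n) (Fin n) ℝ) : Prop :=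
  (∀ i j, 0 ≤ P i j) ∧ (∀ i, ∑ j, P i j = 1) ∧ (∀ j, ∑ i, P i j = 1)

theorem stmt_16 {n : ℕ} (A : Matrix (Fin n) (Fin n) ℝ)
    (hA : A.IsSymm)
    (hdist : ∃ (lam : Fin n → ℝ) (v : Fin n → Fin n → ℝ),
      Function.Injective lam ∧ ∀ i, v i ≠ 0 ∧ A *ᵥ v i = lam i • v i)
    (hone : ∀ (u : Fin n → ℝ) (μ : ℝ), u ≠ 0 → A *ᵥ u = μ • u → ∑ i, u i ≠ 0) :
    ∀ P : Matrix (Fin n) (Fin n) ℝ, IsPermMatrix P → P * A = A * P → P = 1 := by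
  intro P hP hcomm
  rcases Nat.eq_zero_or_pos n with hn | hn
  · subst hn; ext i j; exact i.elim0
  haveI : Nonempty (Fin n) := ⟨⟨0, hn⟩⟩
  obtain ⟨lam, v, hlam, hv⟩ := hdist
  -- v is linearly independent
  have heig : ∀ i, Module.End.HasEigenvector (Matrix.mulVecLin A : Module.End ℝ (Fin n → ℝ)) (lam i) (v i) := by
    intro i
    rw [Module.End.hasEigenvector_iff]
    refine ⟨?_, (hv i).1⟩
    rw [Module.End.mem_eigenspace_iff]
    exact (hv i).2
  have hli : LinearIndependent ℝ v :=
    Module.End.eigenvectors_linearIndependent' (Matrix.mulVecLin A : Module.End ℝ (Fin n → ℝ)) lam hlam v heig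
  have hcard : Fintype.card (Fin n) = Module.finrank ℝ (Fin n → ℝ) := by simp
  let b : Module.Basis (Fin n) ℝ (Fin n → ℝ) := basisOfLinearIndependentOfCardEqFinrank hli hcard
  have hb : ∀ i, b i = v i := fun i => congrFun (coe_basisOfLinearIndependentOfCardEqFinrank hli hcard) i
  -- column sums preserve total sum
  have hsum : ∀ x : Fin n → ℝ, ∑ k, (P *ᵥ x) k = ∑ k, x k := by
    intro x
    simp only [Matrix.mulVec, dotProduct]
    rw [Finset.sum_comm]
    refine Finset.sum_congr rfl fun j _ => ?_
    rw [← Finset.sum_mul, hP.2.2 j, one_mul]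
  -- P fixes each v i
  have hfix : ∀ i, P *ᵥ v i = v i := by
    intro i
    set w := P *ᵥ v i with hw
    have hAw : A *ᵥ w = lam i • w := by
      rw [hw, Matrix.mulVec_mulVec, ← hcomm, ← Matrix.mulVec_mulVec, (hv i).2,
        Matrix.mulVec_smul]
    set c := b.repr w with hc
    have hrep : w = ∑ j, c j • v j := by
      conv_lhs => rw [← b.sum_repr w]
      exact Finset.sum_congr rfl fun j _ => by rw [hb]
    have h1 : A *ᵥ w = ∑ j, (c j * lam j) • v j := by
      rw [hrep]
      simp only [← Matrix.mulVecLin_apply, map_sum]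
      refine Finset.sum_congr rfl fun j _ => ?_
      rw [Matrix.mulVecLin_apply, Matrix.mulVec_smul, (hv j).2, smul_smul, mul_comm]
    have h2 : A *ᵥ w = ∑ j, (lam i * c j) • v j := by
      rw [hAw, hrep, Finset.smul_sum]
      refine Finset.sum_congr rfl fun j _ => by rw [smul_smul]
    have h3 : ∀ j, c j * lam j = lam i * c j := by
      have := h1.symm.trans h2
      have h4 : ∑ j, ((c j * lam j) - (lam i * c j)) • v j = 0 := by
        simp only [sub_smul]
        rw [Finset.sum_sub_distrib, this, sub_self]
      intro j
      have := linearIndependent_iff'.mp hli Finset.univ _ h4 j (Finset.mem_univ j)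
      linarith
    have hzero : ∀ j, j ≠ i → c j = 0 := by
      intro j hj
      have := h3 j
      have hne : lam j ≠ lam i := fun h => hj (hlam h)
      have : c j * (lam j - lam i) = 0 := by ring_nf; linarith [h3 j]
      rcases mul_eq_zero.mp this with h | h
      · exact h
      · exact absurd (by linarith : lam j = lam i) hne
    have hrep2 : w = c i • v i := by
      rw [hrep, Finset.sum_eq_single i (fun j _ hj => by rw [hzero j hj, zero_smul])
        (fun h => absurd (Finset.mem_univ i) h)]
    -- sum condition
    have hS : ∑ k, v i k ≠ 0 := hone (v i) (lam i) (hv i).1 (hv i).2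
    have hsum2 : ∑ k, w k = ∑ k, v i k := hsum (v i)
    have hsum3 : ∑ k, w k = c i * ∑ k, v i k := by
      rw [hrep2]; simp [Finset.mul_sum]
    have hci : c i = 1 := mul_right_cancel₀ hS (by rw [← hsum3, hsum2, one_mul])
    rw [hrep2, hci, one_smul]
  -- P fixes everything, hence P = 1
  have hall : ∀ x : Fin n → ℝ, P *ᵥ x = x := by
    intro x
    have := b.sum_repr x
    conv_lhs => rw [← this]
    conv_rhs => rw [← this]
    simp only [← Matrix.mulVecLin_apply, map_sum]
    refine Finset.sum_congr rfl fun j _ => ?_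
    rw [Matrix.mulVecLin_apply, hb, Matrix.mulVec_smul, hfix]
  ext i j
  have := congrFun (hall (Pi.single j 1)) i
  rw [Matrix.mulVec_single] at this
  simpa [Matrix.one_apply, Pi.single_apply, eq_comm] using this
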